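/- Let s_1, s_2, s'_1, s'_2, t_0, t_1, t_2 be simple braids satisfying t_2 s_1 = s'_1 t_1, t_1 s_2 = s'_2 t_0, and gcd_L(s'_2, t_1) = 1. If (s_1, s_2) is normal, then (s'_1, s'_2) is normal as well. -/

import Mathlib

/-- Relations of the braid group presentation. -/
def braidRels (n : ℕ) : Set (FreeGroup (Fin (n - 1))) :=
  {r | (∃ i j : Fin (n - 1), (i : ℕ) + 2 ≤ (j : ℕ) ∧
          r = FreeGroup.of i * FreeGroup.of j * (FreeGroup.of j * FreeGroup.of i)⁻¹) ∨
       (∃ i j : Fin (n - 1), (i : ℕ) + 1 = (j : ℕ) ∧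
          r = FreeGroup.of i * FreeGroup.of j * FreeGroup.of i *
              (FreeGroup.of j * FreeGroup.of i * FreeGroup.of j)⁻¹)}

/-- Artin's braid group `B_n`. -/
def BraidGroup (n : ℕ) : Type := PresentedGroup (braidRels n)

instance (n : ℕ) : Group (BraidGroup n) :=
  inferInstanceAs (Group (PresentedGroup (braidRels n)))

/-- The Artin generator `σ_{i+1}` (0-indexed `i`). -/
def braidGen {n : ℕ} (i : Fin (n - 1)) : BraidGroup n := PresentedGroup.of i

/-- The positive braid monoid `B_n^+` (submonoid generated by the `σ_i`). -/
def PosBraid (n : ℕ) : Submonoid (BraidGroup n) :=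
  Submonoid.closure (Set.range (braidGen (n := n)))

/-- `x` left-divides `y` (with positive quotient). -/
def DividesL {n : ℕ} (x y : BraidGroup n) : Prop := ∃ z ∈ PosBraid n, y = x * z

/-- `x` right-divides `y` (with positive quotient). -/
def DividesR {n : ℕ} (x y : BraidGroup n) : Prop := ∃ z ∈ PosBraid n, y = z * x

/-- Auxiliary: `deltaAux n m` is the Garside element `Δ_m` viewed inside `B_n`. -/
def deltaAux (n : ℕ) : ℕ → BraidGroup n
  | 0 => 1
  | m + 1 =>
      ((List.range m).map (fun i =>
        if h : i < n - 1 then braidGen ⟨i, h⟩ else 1)).prod * deltaAux n m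

/-- Garside's element `Δ_n = σ_1⋯σ_{n-1} Δ_{n-1}`. -/
def braidDelta (n : ℕ) : BraidGroup n := deltaAux n n

/-- A simple braid: a (positive) divisor of `Δ_n`. -/
def Simple {n : ℕ} (s : BraidGroup n) : Prop :=
  s ∈ PosBraid n ∧ DividesL s (braidDelta n)

/-- Normality of a pair, in the divisor form: every `σ_i` left-dividing `t`
right-divides `s`. -/
def NormalPair {n : ℕ} (s t : BraidGroup n) : Prop :=
  ∀ i : Fin (n - 1), DividesL (braidGen i) t → DividesR (braidGen i) s

/-- `g` is the left gcd of `x` and `y` in `B_n^+`. -/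
def IsLeftGcd {n : ℕ} (g x y : BraidGroup n) : Prop :=
  g ∈ PosBraid n ∧ DividesL g x ∧ DividesL g y ∧
    ∀ d ∈ PosBraid n, DividesL d x → DividesL d y → DividesL d g

/-- Normality of a pair, in the gcd form: `s = gcd_L(st, Δ_n)`. -/
def GNormal {n : ℕ} (s t : BraidGroup n) : Prop :=
  IsLeftGcd s (s * t) (braidDelta n)

/-- `u` is the left lcm of `x` and `y`. -/
def IsLeftLcm {n : ℕ} (u x y : BraidGroup n) : Prop :=
  DividesR x u ∧ DividesR y u ∧ ∀ v, DividesR x v → DividesR y v → DividesR u v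

/-- The position `i` inside `Fin n`. -/
def finL {n : ℕ} (i : Fin (n - 1)) : Fin n := ⟨i, by have := i.isLt; omega⟩

/-- The position `i + 1` inside `Fin n`. -/
def finR {n : ℕ} (i : Fin (n - 1)) : Fin n := ⟨(i : ℕ) + 1, by have := i.isLt; omega⟩

/-- `i` is a descent of the permutation `f` : `f(i) > f(i+1)`. -/
def Descent {n : ℕ} (f : Equiv.Perm (Fin n)) (i : Fin (n - 1)) : Prop :=
  f (finR i) < f (finL i)

/-- `i` is a recoil of the permutation `f` : `f⁻¹(i) > f⁻¹(i+1)`. -/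
def Recoil {n : ℕ} (f : Equiv.Perm (Fin n)) (i : Fin (n - 1)) : Prop :=
  f⁻¹ (finR i) < f⁻¹ (finL i)

/-- Braid words: letters are a generator index together with a sign
(`true` = positive letter `σ_i`, `false` = negative letter `σ_i⁻¹`). -/
abbrev BWord (n : ℕ) := List (Fin (n - 1) × Bool)

/-- The braid represented by a braid word. -/
def evalWord {n : ℕ} (w : BWord n) : BraidGroup n :=
  (w.map (fun x => if x.2 then braidGen x.1 else (braidGen x.1)⁻¹)).prod

namespace BraidProof

variable {n : ℕ}

abbrev Idx (n : ℕ) := Fin (n - 1)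
abbrev W (n : ℕ) := FreeMonoid (Idx n)

/-- Monoid version of the braid relations. -/
def mrel (n : ℕ) : W n → W n → Prop := fun a b =>
  (∃ i j : Idx n, (i : ℕ) + 2 ≤ (j : ℕ) ∧
      a = FreeMonoid.of i * FreeMonoid.of j ∧ b = FreeMonoid.of j * FreeMonoid.of i) ∨
  (∃ i j : Idx n, (i : ℕ) + 1 = (j : ℕ) ∧
      a = FreeMonoid.of i * FreeMonoid.of j * FreeMonoid.of i ∧
      b = FreeMonoid.of j * FreeMonoid.of i * FreeMonoid.of j)

abbrev M (n : ℕ) := PresentedMonoid (mrel n)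

/-- The generator of the monoid. -/
abbrev σ (i : Idx n) : M n := PresentedMonoid.of (mrel n) i

abbrev mk (u : W n) : M n := PresentedMonoid.mk (mrel n) u

theorem mk_of (i : Idx n) : mk (FreeMonoid.of i) = σ i := rfl

theorem mrel_length {a b : W n} (h : mrel n a b) : a.length = b.length := by
  rcases h with ⟨i, j, _, rfl, rfl⟩ | ⟨i, j, _, rfl, rfl⟩ <;> simp [FreeMonoid.length_mul]

theorem rel_length {a b : W n} (h : ConGen.Rel (mrel n) a b) : a.length = b.length := by
  induction h with
  | of x y h => exact mrel_length h
  | refl => rfl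
  | symm _ ih => omega
  | trans _ _ ih1 ih2 => omega
  | mul _ _ ih1 ih2 => simp [FreeMonoid.length_mul]; omega

/-- extracting a word-level relation from an equality in `M`. -/
theorem exact {a b : W n} (h : mk a = mk b) : ConGen.Rel (mrel n) a b :=
  Quotient.exact h

theorem sound {a b : W n} (h : ConGen.Rel (mrel n) a b) : mk a = mk b :=
  Quotient.sound h

/-- adjacency / distance -/
def adj (i j : Idx n) : Prop := (i : ℕ) + 1 = j ∨ (j : ℕ) + 1 = i
def dist (i j : Idx n) : Prop := (i : ℕ) + 2 ≤ j ∨ (j : ℕ) + 2 ≤ i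

theorem adj_symm {i j : Idx n} (h : adj i j) : adj j i := h.symm
theorem dist_symm {i j : Idx n} (h : dist i j) : dist j i := h.symm

theorem tri (i j : Idx n) : i = j ∨ adj i j ∨ dist i j := by
  rcases Nat.lt_trichotomy (i : ℕ) (j : ℕ) with h | h | h
  · rcases Nat.lt_or_ge ((i : ℕ) + 1) j with h2 | h2
    · exact Or.inr (Or.inr (Or.inl (by omega)))
    · exact Or.inr (Or.inl (Or.inl (by omega)))
  · exact Or.inl (Fin.ext h)
  · rcases Nat.lt_or_ge ((j : ℕ) + 1) i with h2 | h2
    · exact Or.inr (Or.inr (Or.inr (by omega)))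
    · exact Or.inr (Or.inl (Or.inr (by omega)))

theorem adj_ne {i j : Idx n} (h : adj i j) : i ≠ j := by
  rintro rfl; rcases h with h | h <;> omega

theorem dist_ne {i j : Idx n} (h : dist i j) : i ≠ j := by
  rintro rfl; rcases h with h | h <;> omega

theorem not_adj_and_dist {i j : Idx n} (h1 : adj i j) (h2 : dist i j) : False := by
  rcases h1 with h1 | h1 <;> rcases h2 with h2 | h2 <;> omega

theorem comm_rel {i j : Idx n} (h : dist i j) : σ i * σ j = σ j * σ i := by
  rcases h with h | h
  · exact sound (ConGen.Rel.of _ _ (Or.inl ⟨i, j, h, rfl, rfl⟩))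
  · exact (sound (ConGen.Rel.of _ _ (Or.inl ⟨j, i, h, rfl, rfl⟩))).symm

theorem braid_rel {i j : Idx n} (h : adj i j) : σ i * σ j * σ i = σ j * σ i * σ j := by
  rcases h with h | h
  · exact sound (ConGen.Rel.of _ _ (Or.inr ⟨i, j, h, rfl, rfl⟩))
  · exact (sound (ConGen.Rel.of _ _ (Or.inr ⟨j, i, h, rfl, rfl⟩))).symm

/-- assoc-normalized versions -/
theorem comm_rel' {i j : Idx n} (h : dist i j) (t : M n) :
    σ i * (σ j * t) = σ j * (σ i * t) := by
  rw [← mul_assoc, comm_rel h, mul_assoc]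

theorem braid_rel' {i j : Idx n} (h : adj i j) (t : M n) :
    σ i * (σ j * (σ i * t)) = σ j * (σ i * (σ j * t)) := by
  rw [← mul_assoc, ← mul_assoc, braid_rel h, mul_assoc, mul_assoc]

/-- The length homomorphism. -/
def ℓ : M n →* Multiplicative ℕ :=
  PresentedMonoid.lift (fun _ => Multiplicative.ofAdd 1) (by
    intro a b h
    rcases h with ⟨i, j, _, rfl, rfl⟩ | ⟨i, j, _, rfl, rfl⟩ <;> simp [map_mul])

def ℓn (x : M n) : ℕ := Multiplicative.toAdd (ℓ x)

theorem ℓn_mul (x y : M n) : ℓn (x * y) = ℓn x + ℓn y := by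
  unfold ℓn; rw [map_mul]; rfl

theorem ℓn_one : ℓn (1 : M n) = 0 := by
  unfold ℓn; rw [map_one]; rfl

theorem ℓn_σ (i : Idx n) : ℓn (σ i) = 1 := rfl

theorem ℓn_mk (u : W n) : ℓn (mk u) = u.length := by
  induction u using FreeMonoid.recOn with
  | one => simpa using ℓn_one
  | of_mul i u ih =>
    have : mk (FreeMonoid.of i * u) = σ i * mk u := rfl
    rw [this, ℓn_mul, ℓn_σ, ih]
    simp [FreeMonoid.length_mul]

theorem eq_one_of_ℓn {x : M n} (h : ℓn x = 0) : x = 1 := by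
  obtain ⟨u, rfl⟩ := PresentedMonoid.surjective_mk (rels := mrel n) x
  rw [ℓn_mk] at h
  have : u = 1 := FreeMonoid.length_eq_zero.mp h
  rw [this]; rfl

/-- head decomposition -/
theorem head_decomp {x : M n} (h : x ≠ 1) :
    ∃ (i : Idx n) (y : M n), x = σ i * y ∧ ℓn y + 1 = ℓn x := by
  obtain ⟨u, rfl⟩ := PresentedMonoid.surjective_mk (rels := mrel n) x
  rcases u with _ | ⟨i, u⟩
  · exact absurd rfl h
  · refine ⟨i, mk (FreeMonoid.ofList u), rfl, ?_⟩
    rw [ℓn_mk]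
    show _ = ℓn (mk (FreeMonoid.of i * FreeMonoid.ofList u))
    rw [ℓn_mk, FreeMonoid.length_mul, FreeMonoid.length_of]
    omega

/-- FreeMonoid head injectivity -/
theorem head_eq {i i' : Idx n} {u u' : W n}
    (h : FreeMonoid.of i * u = FreeMonoid.of i' * u') : i = i' ∧ u = u' := by
  have := congrArg FreeMonoid.toList h
  simp only [FreeMonoid.toList_of_mul] at this
  exact ⟨(List.cons.injEq _ _ _ _ ▸ this).1, (List.cons.injEq _ _ _ _ ▸ this).2⟩

end BraidProof

namespace BraidProof

variable {n : ℕ}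

open Classical in
/-- `comp i j` : the complement, with `σ j * comp i j = σ i * comp j i = lcm`. -/
noncomputable def comp (i j : Idx n) : M n :=
  if i = j then 1 else if adj i j then σ i * σ j else σ i

theorem comp_self (i : Idx n) : comp i i = 1 := by
  unfold comp; rw [if_pos rfl]

theorem comp_adj {i j : Idx n} (h : adj i j) : comp i j = σ i * σ j := by
  unfold comp; rw [if_neg (adj_ne h), if_pos h]

theorem comp_dist {i j : Idx n} (h : dist i j) : comp i j = σ i := by
  unfold comp
  rw [if_neg (dist_ne h), if_neg (fun ha => not_adj_and_dist ha h)]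

theorem comp_key (i j : Idx n) : σ i * comp j i = σ j * comp i j := by
  rcases tri i j with rfl | h | h
  · rfl
  · rw [comp_adj (adj_symm h), comp_adj h, ← mul_assoc, ← mul_assoc, braid_rel h]
  · rw [comp_dist (dist_symm h), comp_dist h, comm_rel h]

theorem ℓeq {x y : M n} (h : x = y) : ℓn x = ℓn y := congrArg _ h

/-- Statement of Theorem H, bounded by length. -/
def THS (n : ℕ) (L : ℕ) : Prop :=
  ∀ (i j : Idx n) (x y : M n), ℓn x < L → σ i * x = σ j * y →
    ∃ w : M n, x = comp j i * w ∧ y = comp i j * w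

theorem THS_zero : THS n 0 := fun _ _ _ _ h => absurd h (by omega)

theorem cancel_of_THS {L : ℕ} (HTH : THS n L) {a : Idx n} {x y : M n}
    (hx : ℓn x < L) (h : σ a * x = σ a * y) : x = y := by
  obtain ⟨w, hw1, hw2⟩ := HTH a a x y hx h
  rw [hw1, hw2, comp_self]

theorem cancel_comp_of_THS {L : ℕ} (HTH : THS n L) {a b : Idx n} {x y : M n}
    (hx : ℓn (comp a b * x) ≤ L) (h : comp a b * x = comp a b * y) : x = y := by
  rcases tri a b with rfl | hab | hab
  · rwa [comp_self, one_mul, one_mul] at h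
  · rw [comp_adj hab] at h hx
    rw [mul_assoc, mul_assoc] at h
    simp only [ℓn_mul, ℓn_σ] at hx
    have l1 : ℓn (σ b * x) < L := by simp only [ℓn_mul, ℓn_σ]; omega
    have h4 := cancel_of_THS HTH l1 h
    have l2 : ℓn x < L := by omega
    exact cancel_of_THS HTH l2 h4
  · rw [comp_dist hab] at h hx
    simp only [ℓn_mul, ℓn_σ] at hx
    have l2 : ℓn x < L := by omega
    exact cancel_of_THS HTH l2 h

/-- The cube condition resolution used in the `trans` case of Theorem H. -/
theorem cube {L : ℕ} (HTH : THS n L) {i p j : Idx n} {A B : M n}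
    (hlen : ℓn (comp i p * A) ≤ L)
    (h : comp i p * A = comp j p * B) :
    ∃ w₃ : M n, comp p i * A = comp j i * w₃ ∧ comp p j * B = comp i j * w₃ := by
  rcases tri i p with rfl | hip | hip
  · rw [comp_self, one_mul] at h
    exact ⟨B, by rw [comp_self, one_mul, h], rfl⟩
  · rcases tri p j with rfl | hpj | hpj
    · rw [comp_self, one_mul] at h
      exact ⟨A, rfl, by rw [comp_self, one_mul, ← h]⟩
    · rcases tri i j with rfl | hij | hij
      · have hAB : A = B := cancel_comp_of_THS HTH hlen h
        subst hAB
        exact ⟨comp p i * A, by rw [comp_self, one_mul], by rw [comp_self, one_mul]⟩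
      · exfalso
        rcases hip with h1 | h1 <;> rcases hpj with h2 | h2 <;> rcases hij with h3 | h3 <;> omega
      · -- CASE 5 : adj i p, adj p j, dist i j
        rw [comp_adj hip, comp_adj (adj_symm hpj)] at h
        simp only [mul_assoc] at h
        rw [comp_adj hip] at hlen
        simp only [ℓn_mul, ℓn_σ] at hlen
        have hBA : ℓn A = ℓn B := by
          have e := ℓeq h; simp only [ℓn_mul, ℓn_σ] at e; omega
        have l1 : ℓn (σ p * A) < L := by simp only [ℓn_mul, ℓn_σ]; omega
        obtain ⟨y, hy1, hy2⟩ := HTH i j (σ p * A) (σ p * B) l1 h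
        rw [comp_dist (dist_symm hij)] at hy1
        rw [comp_dist hij] at hy2
        have l2 : ℓn A < L := by omega
        obtain ⟨z, hz1, hz2⟩ := HTH p j A y l2 hy1
        rw [comp_adj (adj_symm hpj)] at hz1
        rw [comp_adj hpj] at hz2
        simp only [mul_assoc] at hz1 hz2
        have hZl : ℓn z + 2 = ℓn A := by
          have e := ℓeq hz1; simp only [ℓn_mul, ℓn_σ] at e; omega
        rw [hz2] at hy2
        have l3 : ℓn B < L := by omega
        obtain ⟨z', hz'1, hz'2⟩ := HTH p i B (σ p * (σ j * z)) l3 hy2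
        rw [comp_adj hip] at hz'1
        rw [comp_adj (adj_symm hip)] at hz'2
        simp only [mul_assoc] at hz'1 hz'2
        have l4 : ℓn (σ j * z) < L := by simp only [ℓn_mul, ℓn_σ]; omega
        have hji : σ j * z = σ i * z' := cancel_of_THS HTH l4 hz'2
        have l5 : ℓn z < L := by omega
        obtain ⟨z'', hz''1, hz''2⟩ := HTH j i z z' l5 hji
        rw [comp_dist hij] at hz''1
        rw [comp_dist (dist_symm hij)] at hz''2
        have hA : A = σ j * (σ p * (σ i * z'')) := by rw [hz1, hz''1]
        have hB : B = σ i * (σ p * (σ j * z'')) := by rw [hz'1, hz''2]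
        refine ⟨σ p * (σ j * (σ i * (σ p * z''))), ?_, ?_⟩
        · rw [comp_adj (adj_symm hip), comp_dist (dist_symm hij)]
          simp only [mul_assoc]
          rw [hA]
          conv_lhs => rw [comm_rel' hij (σ p * (σ i * z''))]
          conv_lhs => rw [braid_rel' hip z'']
          conv_lhs => rw [braid_rel' hpj (σ i * (σ p * z''))]
        · rw [comp_adj hpj, comp_dist hij]
          simp only [mul_assoc]
          rw [hB]
          conv_lhs => rw [comm_rel' (dist_symm hij) (σ p * (σ j * z''))]
          conv_lhs => rw [braid_rel' (adj_symm hpj) z'']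
          conv_lhs => rw [braid_rel' (adj_symm hip) (σ j * (σ p * z''))]
          conv_lhs => rw [comm_rel' hij (σ p * z'')]
    · rcases tri i j with rfl | hij | hij
      · have hAB : A = B := cancel_comp_of_THS HTH hlen h
        subst hAB
        exact ⟨comp p i * A, by rw [comp_self, one_mul], by rw [comp_self, one_mul]⟩
      · -- CASE 6 : adj i p, dist p j, adj i j
        rw [comp_adj hip, comp_dist (dist_symm hpj)] at h
        simp only [mul_assoc] at h
        rw [comp_adj hip] at hlen
        simp only [ℓn_mul, ℓn_σ] at hlen
        have l1 : ℓn (σ p * A) < L := by simp only [ℓn_mul, ℓn_σ]; omega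
        obtain ⟨y, hy1, hy2⟩ := HTH i j (σ p * A) B l1 h
        rw [comp_adj (adj_symm hij)] at hy1
        rw [comp_adj hij] at hy2
        simp only [mul_assoc] at hy1 hy2
        have hYl : ℓn y + 1 = ℓn A := by
          have e := ℓeq hy1; simp only [ℓn_mul, ℓn_σ] at e; omega
        have l2 : ℓn A < L := by omega
        obtain ⟨z, hz1, hz2⟩ := HTH p j A (σ i * y) l2 hy1
        rw [comp_dist (dist_symm hpj)] at hz1
        rw [comp_dist hpj] at hz2
        have l3 : ℓn y < L := by omega
        obtain ⟨z', hz'1, hz'2⟩ := HTH i p y z l3 hz2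
        rw [comp_adj (adj_symm hip)] at hz'1
        rw [comp_adj hip] at hz'2
        simp only [mul_assoc] at hz'1 hz'2
        have hA : A = σ j * (σ i * (σ p * z')) := by rw [hz1, hz'2]
        have hB : B = σ i * (σ j * (σ p * (σ i * z'))) := by rw [hy2, hz'1]
        refine ⟨σ p * (σ i * (σ j * z')), ?_, ?_⟩
        · rw [comp_adj (adj_symm hip), comp_adj (adj_symm hij)]
          simp only [mul_assoc]
          rw [hA]
          conv_lhs => rw [braid_rel' hij (σ p * z')]
          conv_lhs => rw [comm_rel' hpj (σ i * (σ j * (σ p * z')))]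
          conv_lhs => rw [comm_rel' (dist_symm hpj) z']
          conv_lhs => rw [braid_rel' (adj_symm hip) (σ j * z')]
        · rw [comp_dist hpj, comp_adj hij]
          simp only [mul_assoc]
          rw [hB]
          conv_lhs => rw [comm_rel' (dist_symm hpj) (σ i * z')]
          conv_lhs => rw [braid_rel' (adj_symm hip) (σ j * (σ i * z'))]
          conv_lhs => rw [braid_rel' hij z']
          conv_lhs => rw [comm_rel' hpj (σ i * (σ j * z'))]
      · -- CASE 2 : adj i p, dist p j, dist i j
        rw [comp_adj hip, comp_dist (dist_symm hpj)] at h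
        simp only [mul_assoc] at h
        rw [comp_adj hip] at hlen
        simp only [ℓn_mul, ℓn_σ] at hlen
        have l1 : ℓn (σ p * A) < L := by simp only [ℓn_mul, ℓn_σ]; omega
        obtain ⟨y, hy1, hy2⟩ := HTH i j (σ p * A) B l1 h
        rw [comp_dist (dist_symm hij)] at hy1
        rw [comp_dist hij] at hy2
        have l2 : ℓn A < L := by omega
        obtain ⟨z, hz1, hz2⟩ := HTH p j A y l2 hy1
        rw [comp_dist (dist_symm hpj)] at hz1
        rw [comp_dist hpj] at hz2
        refine ⟨σ p * (σ i * z), ?_, ?_⟩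
        · rw [comp_adj (adj_symm hip), comp_dist (dist_symm hij)]
          simp only [mul_assoc]
          rw [hz1]
          conv_lhs => rw [comm_rel' hij z]
          conv_lhs => rw [comm_rel' hpj (σ i * z)]
        · rw [comp_dist hpj, comp_dist hij, hy2, hz2]
          conv_lhs => rw [braid_rel' (adj_symm hip) z]
  · rcases tri p j with rfl | hpj | hpj
    · rw [comp_self, one_mul] at h
      exact ⟨A, rfl, by rw [comp_self, one_mul, ← h]⟩
    · rcases tri i j with rfl | hij | hij
      · have hAB : A = B := cancel_comp_of_THS HTH hlen h
        subst hAB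
        exact ⟨comp p i * A, by rw [comp_self, one_mul], by rw [comp_self, one_mul]⟩
      · -- CASE 7 : dist i p, adj p j, adj i j
        rw [comp_dist hip, comp_adj (adj_symm hpj)] at h
        simp only [mul_assoc] at h
        rw [comp_dist hip] at hlen
        simp only [ℓn_mul, ℓn_σ] at hlen
        have l1 : ℓn A < L := by omega
        obtain ⟨y, hy1, hy2⟩ := HTH i j A (σ p * B) l1 h
        rw [comp_adj (adj_symm hij)] at hy1
        rw [comp_adj hij] at hy2
        simp only [mul_assoc] at hy1 hy2
        have hYl : ℓn y + 2 = ℓn A := by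
          have e := ℓeq hy1; simp only [ℓn_mul, ℓn_σ] at e; omega
        have hBl : ℓn B + 1 = ℓn A := by
          have e := ℓeq h; simp only [ℓn_mul, ℓn_σ] at e; omega
        have l2 : ℓn B < L := by omega
        obtain ⟨z, hz1, hz2⟩ := HTH p i B (σ j * y) l2 hy2
        rw [comp_dist hip] at hz1
        rw [comp_dist (dist_symm hip)] at hz2
        have l3 : ℓn y < L := by omega
        obtain ⟨z', hz'1, hz'2⟩ := HTH j p y z l3 hz2
        rw [comp_adj hpj] at hz'1
        rw [comp_adj (adj_symm hpj)] at hz'2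
        simp only [mul_assoc] at hz'1 hz'2
        have hA : A = σ j * (σ i * (σ p * (σ j * z'))) := by rw [hy1, hz'1]
        have hB : B = σ i * (σ j * (σ p * z')) := by rw [hz1, hz'2]
        refine ⟨σ p * (σ j * (σ i * z')), ?_, ?_⟩
        · rw [comp_dist (dist_symm hip), comp_adj (adj_symm hij)]
          simp only [mul_assoc]
          rw [hA]
          conv_lhs => rw [comm_rel' hip (σ j * z')]
          conv_lhs => rw [braid_rel' hpj (σ i * (σ j * z'))]
          conv_lhs => rw [braid_rel' (adj_symm hij) z']
          conv_lhs => rw [comm_rel' (dist_symm hip) (σ j * (σ i * z'))]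
        · rw [comp_adj hpj, comp_adj hij]
          simp only [mul_assoc]
          rw [hB]
          conv_lhs => rw [braid_rel' (adj_symm hij) (σ p * z')]
          conv_lhs => rw [comm_rel' (dist_symm hip) (σ j * (σ i * (σ p * z')))]
          conv_lhs => rw [comm_rel' hip z']
          conv_lhs => rw [braid_rel' hpj (σ i * z')]
      · -- CASE 3 : dist i p, adj p j, dist i j
        rw [comp_dist hip, comp_adj (adj_symm hpj)] at h
        simp only [mul_assoc] at h
        rw [comp_dist hip] at hlen
        simp only [ℓn_mul, ℓn_σ] at hlen
        have l1 : ℓn A < L := by omega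
        obtain ⟨y, hy1, hy2⟩ := HTH i j A (σ p * B) l1 h
        rw [comp_dist (dist_symm hij)] at hy1
        rw [comp_dist hij] at hy2
        have hBl : ℓn B + 1 = ℓn A := by
          have e := ℓeq h; simp only [ℓn_mul, ℓn_σ] at e; omega
        have l2 : ℓn B < L := by omega
        obtain ⟨z, hz1, hz2⟩ := HTH p i B y l2 hy2
        rw [comp_dist hip] at hz1
        rw [comp_dist (dist_symm hip)] at hz2
        refine ⟨σ p * (σ j * z), ?_, ?_⟩
        · rw [comp_dist (dist_symm hip), comp_dist (dist_symm hij), hy1, hz2]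
          conv_lhs => rw [braid_rel' hpj z]
        · rw [comp_adj hpj, comp_dist hij]
          simp only [mul_assoc]
          rw [hz1]
          conv_lhs => rw [comm_rel' (dist_symm hij) z]
          conv_lhs => rw [comm_rel' (dist_symm hip) (σ j * z)]
    · rcases tri i j with rfl | hij | hij
      · have hAB : A = B := cancel_comp_of_THS HTH hlen h
        subst hAB
        exact ⟨comp p i * A, by rw [comp_self, one_mul], by rw [comp_self, one_mul]⟩
      · -- CASE 4 : dist i p, dist p j, adj i j
        rw [comp_dist hip, comp_dist (dist_symm hpj)] at h
        rw [comp_dist hip] at hlen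
        simp only [ℓn_mul, ℓn_σ] at hlen
        have l1 : ℓn A < L := by omega
        obtain ⟨y, hy1, hy2⟩ := HTH i j A B l1 h
        rw [comp_adj (adj_symm hij)] at hy1
        rw [comp_adj hij] at hy2
        simp only [mul_assoc] at hy1 hy2
        refine ⟨σ p * y, ?_, ?_⟩
        · rw [comp_dist (dist_symm hip), comp_adj (adj_symm hij)]
          simp only [mul_assoc]
          rw [hy1]
          conv_lhs => rw [comm_rel' hpj (σ i * y)]
          conv_lhs => rw [comm_rel' (dist_symm hip) y]
        · rw [comp_dist hpj, comp_adj hij]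
          simp only [mul_assoc]
          rw [hy2]
          conv_lhs => rw [comm_rel' (dist_symm hip) (σ j * y)]
          conv_lhs => rw [comm_rel' hpj y]
      · -- CASE 1 : dist i p, dist p j, dist i j
        rw [comp_dist hip, comp_dist (dist_symm hpj)] at h
        rw [comp_dist hip] at hlen
        simp only [ℓn_mul, ℓn_σ] at hlen
        have l1 : ℓn A < L := by omega
        obtain ⟨y, hy1, hy2⟩ := HTH i j A B l1 h
        rw [comp_dist (dist_symm hij)] at hy1
        rw [comp_dist hij] at hy2
        refine ⟨σ p * y, ?_, ?_⟩
        · rw [comp_dist (dist_symm hip), comp_dist (dist_symm hij), hy1]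
          conv_lhs => rw [comm_rel' hpj y]
        · rw [comp_dist hpj, comp_dist hij, hy2]
          conv_lhs => rw [comm_rel' (dist_symm hip) y]

end BraidProof

namespace BraidProof

variable {n : ℕ}

theorem mk_mul (a b : W n) : mk (a * b) = mk a * mk b := rfl

theorem word_head (x : W n) : x = 1 ∨ ∃ (i : Idx n) (x' : W n), x = FreeMonoid.of i * x' := by
  rcases x with _ | ⟨i, x'⟩
  · exact Or.inl rfl
  · exact Or.inr ⟨i, FreeMonoid.ofList x', rfl⟩

theorem cons_eq (p : Idx n) (y : List (Idx n)) :
    (FreeMonoid.ofList (p :: y) : W n) = FreeMonoid.of p * FreeMonoid.ofList y := rfl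

/-- Theorem H, word level, one length step. -/
theorem THS_word {L : ℕ} (IH : THS n L) :
    ∀ (u v : W n), ConGen.Rel (mrel n) u v → u.length ≤ L + 1 →
      ∀ (i j : Idx n) (u' v' : W n), u = FreeMonoid.of i * u' → v = FreeMonoid.of j * v' →
      ∃ w : M n, mk u' = comp j i * w ∧ mk v' = comp i j * w := by
  intro u v h
  induction h with
  | of a b hab =>
    intro _ i j u' v' ha hb
    rcases hab with ⟨i0, j0, hd, rfl, rfl⟩ | ⟨i0, j0, hd, rfl, rfl⟩
    · have hdist : dist i0 j0 := Or.inl hd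
      obtain ⟨rfl, rfl⟩ := head_eq ha
      obtain ⟨rfl, rfl⟩ := head_eq hb
      refine ⟨1, ?_, ?_⟩
      · rw [comp_dist (dist_symm hdist), mul_one]; rfl
      · rw [comp_dist hdist, mul_one]; rfl
    · have hadj : adj i0 j0 := Or.inl hd
      rw [mul_assoc] at ha hb
      obtain ⟨rfl, rfl⟩ := head_eq ha
      obtain ⟨rfl, rfl⟩ := head_eq hb
      refine ⟨1, ?_, ?_⟩
      · rw [comp_adj (adj_symm hadj), mul_one]; rfl
      · rw [comp_adj hadj, mul_one]; rfl
  | refl x =>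
    intro _ i j u' v' ha hb
    rw [ha] at hb
    obtain ⟨rfl, rfl⟩ := head_eq hb
    exact ⟨mk u', by rw [comp_self, one_mul], by rw [comp_self, one_mul]⟩
  | symm hxy ih =>
    rename_i x y
    intro hlen i j u' v' ha hb
    have hxl : x.length ≤ L + 1 := by rw [rel_length hxy]; exact hlen
    obtain ⟨w, hw1, hw2⟩ := ih hxl j i v' u' hb ha
    exact ⟨w, hw2, hw1⟩
  | trans hxy hyz ih1 ih2 =>
    rename_i x y z
    intro hlen i j u' v' ha hb
    rcases y with _ | ⟨p, y''⟩
    · exfalso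
      have h0 : x.length = 0 := rel_length hxy
      rw [ha] at h0
      simp [FreeMonoid.length_mul, FreeMonoid.length_of] at h0
    · have hysplit : (FreeMonoid.ofList (p :: y'') : W n) =
          FreeMonoid.of p * FreeMonoid.ofList y'' := rfl
      have hyl : x.length = y''.length + 1 := by
        have h2 : x.length = (FreeMonoid.of p * FreeMonoid.ofList y'' : W n).length :=
          rel_length hxy
        rw [FreeMonoid.length_mul, FreeMonoid.length_of] at h2
        have h3 : (FreeMonoid.ofList y'' : W n).length = y''.length := rfl
        omega
      obtain ⟨w₁, hw11, hw12⟩ := ih1 hlen i p u' (FreeMonoid.ofList y'') ha hysplit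
      obtain ⟨w₂, hw21, hw22⟩ := ih2 (by rw [← rel_length hxy]; exact hlen) p j
        (FreeMonoid.ofList y'') v' hysplit hb
      have heq : comp i p * w₁ = comp j p * w₂ := by rw [← hw12, ← hw21]
      have hbound : ℓn (comp i p * w₁) ≤ L := by
        rw [← hw12, ℓn_mk]
        have : (FreeMonoid.ofList y'' : W n).length = y''.length := rfl
        omega
      obtain ⟨w₃, hc1, hc2⟩ := cube IH hbound heq
      exact ⟨w₃, by rw [hw11, hc1], by rw [hw22, hc2]⟩
  | mul hab hcd ih1 ih2 =>
    rename_i x₁ y₁ x₂ y₂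
    intro hlen i j u' v' ha hb
    rcases word_head x₁ with rfl | ⟨i₁, x₁', rfl⟩
    · have h0 : (y₁ : W n).length = 0 := by rw [← rel_length hab]; rfl
      have hy1 : y₁ = 1 := FreeMonoid.length_eq_zero.mp h0
      subst hy1
      have hx : x₂ = FreeMonoid.of i * u' := by rw [← ha]; rfl
      have hyy : y₂ = FreeMonoid.of j * v' := by rw [← hb]; rfl
      have hxlen : x₂.length ≤ L + 1 := by
        have h2 : ((1 : W n) * x₂).length ≤ L + 1 := hlen
        simpa [FreeMonoid.length_mul] using h2
      exact ih2 hxlen i j u' v' hx hyy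
    · rcases word_head y₁ with rfl | ⟨j₁, y₁', rfl⟩
      · exfalso
        have h0 := rel_length hab
        simp [FreeMonoid.length_mul, FreeMonoid.length_of, FreeMonoid.length_one] at h0
      · rw [mul_assoc] at ha hb
        obtain ⟨rfl, rfl⟩ := head_eq ha
        obtain ⟨rfl, rfl⟩ := head_eq hb
        have hlen1 : (FreeMonoid.of i₁ * x₁').length ≤ L + 1 := by
          simp only [FreeMonoid.length_mul] at hlen ⊢
          omega
        obtain ⟨w, hw1, hw2⟩ := ih1 hlen1 i₁ j₁ x₁' y₁' rfl rfl
        refine ⟨w * mk x₂, ?_, ?_⟩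
        · rw [mk_mul, hw1, mul_assoc]
        · rw [mk_mul, hw2, mul_assoc, ← sound hcd]

theorem THS_succ {L : ℕ} (IH : THS n L) : THS n (L + 1) := by
  intro i j x y hx heq
  obtain ⟨u', rfl⟩ := PresentedMonoid.surjective_mk (rels := mrel n) x
  obtain ⟨v', rfl⟩ := PresentedMonoid.surjective_mk (rels := mrel n) y
  have heq' : mk (FreeMonoid.of i * u') = mk (FreeMonoid.of j * v') := heq
  have hrel := exact heq'
  have hlen : (FreeMonoid.of i * u').length ≤ L + 1 := by
    rw [ℓn_mk] at hx
    simp only [FreeMonoid.length_mul, FreeMonoid.length_of]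
    omega
  exact THS_word IH _ _ hrel hlen i j u' v' rfl rfl

theorem THS_all (L : ℕ) : THS n L := by
  induction L with
  | zero => exact THS_zero
  | succ L IH => exact THS_succ IH

/-- Theorem H, final form. -/
theorem TH {i j : Idx n} {x y : M n} (h : σ i * x = σ j * y) :
    ∃ w : M n, x = comp j i * w ∧ y = comp i j * w :=
  THS_all (ℓn x + 1) i j x y (by omega) h

/-- left cancellation of a generator -/
theorem cancel_σ {a : Idx n} {x y : M n} (h : σ a * x = σ a * y) : x = y :=
  cancel_of_THS (THS_all (ℓn x + 1)) (by omega) h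

/-- left cancellation -/
theorem cancel_left (t : M n) {x y : M n} (h : t * x = t * y) : x = y := by
  obtain ⟨u, rfl⟩ := PresentedMonoid.surjective_mk (rels := mrel n) t
  induction u using FreeMonoid.recOn with
  | one => simpa using h
  | of_mul a u ih =>
    have h2 : σ a * (mk u * x) = σ a * (mk u * y) := by
      rw [← mul_assoc, ← mul_assoc]; exact h
    exact ih (cancel_σ h2)

end BraidProof

namespace BraidProof

variable {n : ℕ}

/-- divisibility in the monoid -/
def DvdM (x y : M n) : Prop := ∃ c, y = x * c

theorem DvdM.refl (x : M n) : DvdM x x := ⟨1, (mul_one x).symm⟩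

theorem DvdM.trans {x y z : M n} (h1 : DvdM x y) (h2 : DvdM y z) : DvdM x z := by
  obtain ⟨c, rfl⟩ := h1; obtain ⟨d, rfl⟩ := h2
  exact ⟨c * d, mul_assoc _ _ _⟩

theorem DvdM.mul_left {x y : M n} (t : M n) (h : DvdM x y) : DvdM (t * x) (t * y) := by
  obtain ⟨c, rfl⟩ := h; exact ⟨c, (mul_assoc _ _ _).symm⟩

/-- minimal complement along a single letter. -/
theorem compl_letter : ∀ (N : ℕ) (i : Idx n) (z d : M n), ℓn (σ i * z) ≤ N →
    DvdM d (σ i * z) →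
    ∃ e : M n, DvdM d (σ i * e) ∧ ∀ z' : M n, DvdM d (σ i * z') → DvdM e z' := by
  intro N
  induction N using Nat.strong_induction_on with
  | _ N IH =>
  intro i z d hN hdvd
  by_cases hd : d = 1
  · subst hd
    exact ⟨1, ⟨σ i * 1, (one_mul _).symm⟩, fun z' _ => ⟨z', (one_mul _).symm⟩⟩
  · obtain ⟨m, d₁, rfl, hlen⟩ := head_decomp hd
    obtain ⟨q, hq⟩ := hdvd
    by_cases hmi : m = i
    · subst hmi
      refine ⟨d₁, DvdM.refl _, ?_⟩
      intro z' ⟨q', hq'⟩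
      rw [mul_assoc] at hq'
      exact ⟨q', cancel_σ hq'⟩
    · rw [mul_assoc] at hq
      obtain ⟨w, hw1, hw2⟩ := TH hq.symm
      rcases tri m i with rfl | hadj | hdist
      · exact absurd rfl hmi
      · -- adjacent
        rw [comp_adj (adj_symm hadj)] at hw1
        rw [comp_adj hadj] at hw2
        rw [mul_assoc] at hw1 hw2
        -- hw1 : d₁ * q = σ i * (σ m * w),  hw2 : z = σ m * (σ i * w)
        have hm1 : ℓn (σ i * (σ m * w)) < N := by
          have e1 := ℓeq hq
          have e2 := ℓeq hw1
          simp only [ℓn_mul, ℓn_σ] at e1 e2 hN ⊢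
          omega
        obtain ⟨e₁, he₁, hmin₁⟩ := IH _ hm1 i (σ m * w) d₁ (le_refl _) ⟨q, hw1.symm⟩
        have he₁w : DvdM e₁ (σ m * w) := hmin₁ _ ⟨q, hw1.symm⟩
        have hm2 : ℓn (σ m * w) < N := by
          have e1 := ℓeq hq
          have e2 := ℓeq hw1
          simp only [ℓn_mul, ℓn_σ] at e1 e2 hN ⊢
          omega
        obtain ⟨e₂, he₂, hmin₂⟩ := IH _ hm2 m w e₁ (le_refl _) he₁w
        refine ⟨σ m * (σ i * e₂), ?_, ?_⟩
        · obtain ⟨c₁, hc₁⟩ := he₁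
          obtain ⟨c₂, hc₂⟩ := he₂
          refine ⟨c₁ * c₂, ?_⟩
          rw [braid_rel' (adj_symm hadj) e₂, hc₂]
          rw [show σ i * (e₁ * c₂) = (σ i * e₁) * c₂ from (mul_assoc _ _ _).symm]
          rw [hc₁]
          simp only [mul_assoc]
        · intro z' ⟨q', hq'⟩
          rw [mul_assoc] at hq'
          obtain ⟨w', hw'1, hw'2⟩ := TH hq'.symm
          rw [comp_adj (adj_symm hadj)] at hw'1
          rw [comp_adj hadj] at hw'2
          rw [mul_assoc] at hw'1 hw'2
          have h1 : DvdM e₁ (σ m * w') := hmin₁ _ ⟨q', hw'1.symm⟩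
          obtain ⟨c₃, hc₃⟩ := hmin₂ _ h1
          refine ⟨c₃, ?_⟩
          rw [hw'2, hc₃]
          simp only [mul_assoc]
      · -- distant
        rw [comp_dist (dist_symm hdist)] at hw1
        rw [comp_dist hdist] at hw2
        -- hw1 : d₁ * q = σ i * w,   hw2 : z = σ m * w
        have hm1 : ℓn (σ i * w) < N := by
          have e1 := ℓeq hq
          have e2 := ℓeq hw1
          simp only [ℓn_mul, ℓn_σ] at e1 e2 hN ⊢
          omega
        obtain ⟨e₁, he₁, hmin₁⟩ := IH _ hm1 i w d₁ (le_refl _) ⟨q, hw1.symm⟩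
        refine ⟨σ m * e₁, ?_, ?_⟩
        · obtain ⟨c₁, hc₁⟩ := he₁
          refine ⟨c₁, ?_⟩
          rw [comm_rel' (dist_symm hdist) e₁, hc₁]
          simp only [mul_assoc]
        · intro z' ⟨q', hq'⟩
          rw [mul_assoc] at hq'
          obtain ⟨w', hw'1, hw'2⟩ := TH hq'.symm
          rw [comp_dist (dist_symm hdist)] at hw'1
          rw [comp_dist hdist] at hw'2
          obtain ⟨c₃, hc₃⟩ := hmin₁ _ ⟨q', hw'1.symm⟩
          exact ⟨c₃, by rw [hw'2, hc₃]; simp only [mul_assoc]⟩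

/-- minimal complement along an arbitrary element. -/
theorem compl_word (t : M n) : ∀ d : M n, (∃ z, DvdM d (t * z)) →
    ∃ c : M n, DvdM d (t * c) ∧ ∀ z' : M n, DvdM d (t * z') → DvdM c z' := by
  obtain ⟨u, rfl⟩ := PresentedMonoid.surjective_mk (rels := mrel n) t
  induction u using FreeMonoid.recOn with
  | one =>
    intro d _
    refine ⟨d, ⟨1, ?_⟩, fun z' hz' => ?_⟩
    · show (1 : M n) * d = d * 1
      rw [one_mul, mul_one]
    · obtain ⟨c, hc⟩ := hz'
      have hc2 : z' = d * c := by rw [← one_mul z']; exact hc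
      exact ⟨c, hc2⟩
  | of_mul a u ihu =>
    intro d hz0
    obtain ⟨z, hz⟩ := hz0
    have hz2 : DvdM d (σ a * (mk u * z)) := by
      obtain ⟨c, hc⟩ := hz
      exact ⟨c, by rw [← mul_assoc]; exact hc⟩
    obtain ⟨e, he, hmin⟩ := compl_letter (ℓn (σ a * (mk u * z))) a (mk u * z) d (le_refl _) hz2
    have hee : DvdM e (mk u * z) := hmin _ hz2
    obtain ⟨c, hc, hcmin⟩ := ihu e ⟨z, hee⟩
    refine ⟨c, ?_, ?_⟩
    · obtain ⟨c₀, hc₀⟩ := he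
      obtain ⟨c₁, hc₁⟩ := hc
      refine ⟨c₀ * c₁, ?_⟩
      have key : σ a * (mk u * c) = d * (c₀ * c₁) := by
        rw [hc₁, show σ a * (e * c₁) = (σ a * e) * c₁ from (mul_assoc _ _ _).symm, hc₀]
        simp only [mul_assoc]
      rw [← mul_assoc] at key
      exact key
    · intro z' hz'
      have hz'2 : DvdM d (σ a * (mk u * z')) := by
        obtain ⟨c', hc'⟩ := hz'
        exact ⟨c', by rw [← mul_assoc]; exact hc'⟩
      exact hcmin _ (hmin _ hz'2)

/-- reversal anti-homomorphism -/
noncomputable def rv : M n →* (M n)ᵐᵒᵖ :=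
  PresentedMonoid.lift (fun i => MulOpposite.op (σ i)) (by
    intro a b h
    rcases h with ⟨i, j, hd, rfl, rfl⟩ | ⟨i, j, hd, rfl, rfl⟩
    · simp only [map_mul, FreeMonoid.lift_eval_of, ← MulOpposite.op_mul]
      exact congrArg MulOpposite.op (comm_rel (Or.inr hd))
    · simp only [map_mul, FreeMonoid.lift_eval_of, ← MulOpposite.op_mul]
      apply congrArg MulOpposite.op
      rw [← mul_assoc, ← mul_assoc, braid_rel (Or.inr hd)])

noncomputable def rev (x : M n) : M n := (rv x).unop

theorem rev_mul (x y : M n) : rev (x * y) = rev y * rev x := by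
  unfold rev; rw [map_mul]; rfl

theorem rev_σ (i : Idx n) : rev (σ i) = σ i := rfl

theorem rev_one : rev (1 : M n) = 1 := by
  unfold rev; rw [map_one]; rfl

theorem rev_rev (x : M n) : rev (rev x) = x := by
  obtain ⟨u, rfl⟩ := PresentedMonoid.surjective_mk (rels := mrel n) x
  induction u using FreeMonoid.recOn with
  | one =>
    show rev (rev (1 : M n)) = (1 : M n)
    rw [rev_one, rev_one]
  | of_mul a u ihu =>
    show rev (rev (σ a * mk u)) = σ a * mk u
    rw [rev_mul, rev_σ, rev_mul, rev_σ, ihu]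

theorem rev_inj : Function.Injective (rev : M n → M n) := by
  intro x y h
  have := congrArg rev h
  rwa [rev_rev, rev_rev] at this

theorem cancel_right (t : M n) {x y : M n} (h : x * t = y * t) : x = y := by
  have h2 := congrArg rev h
  rw [rev_mul, rev_mul] at h2
  exact rev_inj (cancel_left (rev t) h2)

end BraidProof

namespace BraidProof

variable {n : ℕ}

/-- generator with junk fallback, mirroring `deltaAux`. -/
noncomputable def gg (i : ℕ) : M n := if h : i < n - 1 then σ ⟨i, h⟩ else 1

noncomputable def CwM (m : ℕ) : M n := ((List.range m).map gg).prod

noncomputable def δM : ℕ → M n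
  | 0 => 1
  | m + 1 => CwM m * δM m

theorem CwM_zero : (CwM 0 : M n) = 1 := rfl

theorem CwM_succ (m : ℕ) : (CwM (m+1) : M n) = CwM m * gg m := by
  unfold CwM
  rw [List.range_succ, List.map_append, List.prod_append]
  simp

theorem gg_eq (i : ℕ) (h : i < n - 1) : (gg i : M n) = σ ⟨i, h⟩ := dif_pos h

theorem comm_gg {i j : ℕ} (h : i + 2 ≤ j) : (gg i : M n) * gg j = gg j * gg i := by
  unfold gg
  by_cases hi : i < n - 1
  · by_cases hj : j < n - 1
    · rw [dif_pos hi, dif_pos hj]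
      exact comm_rel (Or.inl h)
    · rw [dif_pos hi, dif_neg hj, mul_one, one_mul]
  · rw [dif_neg hi, mul_one, one_mul]

theorem braid_gg {i j : ℕ} (hij : i + 1 = j) (hj : j < n - 1) :
    (gg i : M n) * gg j * gg i = gg j * gg i * gg j := by
  have hi : i < n - 1 := by omega
  unfold gg
  rw [dif_pos hi, dif_pos hj]
  exact braid_rel (Or.inl hij)

theorem comm_gg_CwM {j m : ℕ} (h : m + 1 ≤ j) : (gg j : M n) * CwM m = CwM m * gg j := by
  induction m with
  | zero => rw [CwM_zero, mul_one, one_mul]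
  | succ m IH =>
    rw [CwM_succ, ← mul_assoc, IH (by omega), mul_assoc, ← comm_gg (by omega : m + 2 ≤ j),
      mul_assoc]

theorem comm_gg_δM {j m : ℕ} (h : m ≤ j) : (gg j : M n) * δM m = δM m * gg j := by
  induction m with
  | zero => show (gg j : M n) * 1 = 1 * gg j; rw [mul_one, one_mul]
  | succ m IH =>
    show (gg j : M n) * (CwM m * δM m) = CwM m * δM m * gg j
    rw [← mul_assoc, comm_gg_CwM (by omega), mul_assoc, IH (by omega), mul_assoc]

theorem shift {i m : ℕ} (h1 : i + 1 < m) (h2 : m ≤ n - 1) :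
    (gg (i+1) : M n) * CwM m = CwM m * gg i := by
  induction m with
  | zero => omega
  | succ m IH =>
    rcases Nat.lt_or_ge (i+1) m with hlt | hge
    · rw [CwM_succ, ← mul_assoc, IH hlt (by omega), mul_assoc, comm_gg (by omega : i + 2 ≤ m)]
      simp only [mul_assoc]
    · have him : i + 1 = m := by omega
      subst him
      rw [CwM_succ]
      have hsplit : (CwM (i+1) : M n) = CwM i * gg i := CwM_succ i
      rw [hsplit]
      rw [show (gg (i+1) : M n) * (CwM i * gg i * gg (i+1)) =
        (gg (i+1) * CwM i) * (gg i * gg (i+1)) by simp only [mul_assoc]]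
      rw [comm_gg_CwM (by omega)]
      rw [show (CwM i * gg (i+1) : M n) * (gg i * gg (i+1)) =
        CwM i * (gg (i+1) * gg i * gg (i+1)) by simp only [mul_assoc]]
      rw [← braid_gg rfl (by omega)]
      simp only [mul_assoc]

theorem rev_gg (i : ℕ) : rev (gg i : M n) = gg i := by
  unfold gg
  by_cases hi : i < n - 1
  · rw [dif_pos hi]; exact rev_σ _
  · rw [dif_neg hi]; exact rev_one

noncomputable def RwM (m : ℕ) : M n := rev (CwM m)

theorem RwM_succ (m : ℕ) : (RwM (m+1) : M n) = gg m * RwM m := by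
  unfold RwM
  rw [CwM_succ, rev_mul, rev_gg]

theorem mirror_shift {i m : ℕ} (h1 : i + 1 < m) (h2 : m ≤ n - 1) :
    (gg i : M n) * RwM m = RwM m * gg (i+1) := by
  have := congrArg rev (shift h1 h2)
  rw [rev_mul, rev_mul, rev_gg, rev_gg] at this
  unfold RwM
  exact this.symm

theorem Dlemma : ∀ m : ℕ, m ≤ n - 1 → (δM (m+1) : M n) = δM m * RwM m := by
  intro m
  induction m with
  | zero =>
    intro _
    show (CwM 0 * 1 : M n) = 1 * RwM 0
    unfold RwM
    rw [CwM_zero, rev_one]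
  | succ m IH =>
    intro h
    calc (δM (m+2) : M n) = CwM m * gg m * (δM m * RwM m) := by
          rw [show (δM (m+2) : M n) = CwM (m+1) * δM (m+1) from rfl, CwM_succ,
            IH (by omega)]
      _ = CwM m * (gg m * δM m) * RwM m := by simp only [mul_assoc]
      _ = CwM m * (δM m * gg m) * RwM m := by rw [comm_gg_δM (le_refl m)]
      _ = CwM m * δM m * (gg m * RwM m) := by simp only [mul_assoc]
      _ = δM (m+1) * RwM (m+1) := by
          rw [RwM_succ, show (δM (m+1) : M n) = CwM m * δM m from rfl]

theorem rev_δM : ∀ m : ℕ, m ≤ n → rev (δM m : M n) = δM m := by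
  intro m
  induction m with
  | zero => intro _; exact rev_one
  | succ m IH =>
    intro h
    have hD : (δM (m+1) : M n) = δM m * RwM m := Dlemma m (by omega)
    show rev (CwM m * δM m : M n) = CwM m * δM m
    rw [rev_mul, IH (by omega)]
    show (δM m * RwM m : M n) = CwM m * δM m
    rw [← hD]
    rfl

theorem flip_fam : ∀ m : ℕ, m ≤ n → ∀ i j : ℕ, i + j + 2 = m →
    (gg i : M n) * δM m = δM m * gg j := by
  intro m
  induction m with
  | zero => intro _ i j h; omega
  | succ m IH =>
    intro hm i j hij
    rcases i with _ | i'
    · have hmj : m = j + 1 := by omega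
      subst hmj
      rcases j with _ | j'
      · show (gg 0 : M n) * (CwM 1 * (CwM 0 * δM 0)) = CwM 1 * (CwM 0 * δM 0) * gg 0
        have c1 : (CwM 1 : M n) = CwM 0 * gg 0 := CwM_succ 0
        rw [c1, CwM_zero]
        show (gg 0 : M n) * (1 * gg 0 * (1 * (1:M n))) = 1 * gg 0 * (1 * (1:M n)) * gg 0
        simp
      · have hb1 : j' + 2 ≤ n - 1 := by omega
        have hD : (δM (j'+2+1) : M n) = δM (j'+2) * RwM (j'+2) := Dlemma (j'+2) hb1
        rw [hD, ← mul_assoc]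
        have hIH : (gg 0 : M n) * δM (j'+2) = δM (j'+2) * gg j' :=
          IH (by omega) 0 j' (by omega)
        rw [hIH, mul_assoc]
        have hms : (gg j' : M n) * RwM (j'+2) = RwM (j'+2) * gg (j'+1) :=
          mirror_shift (by omega) hb1
        rw [hms, ← mul_assoc]
    · show (gg (i'+1) : M n) * (CwM m * δM m) = CwM m * δM m * gg j
      have hs : (gg (i'+1) : M n) * CwM m = CwM m * gg i' :=
        shift (by omega) (by omega)
      rw [← mul_assoc, hs, mul_assoc]
      have hIH : (gg i' : M n) * δM m = δM m * gg j := IH (by omega) i' j (by omega)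
      rw [hIH, mul_assoc]

end BraidProof

namespace BraidProof

variable {n : ℕ}

theorem CwM_head : ∀ k : ℕ, ∃ T : M n, CwM (k+1) = gg 0 * T := by
  intro k
  induction k with
  | zero =>
    refine ⟨1, ?_⟩
    have c1 : (CwM 1 : M n) = CwM 0 * gg 0 := CwM_succ 0
    rw [c1, CwM_zero, one_mul, mul_one]
  | succ k IH =>
    obtain ⟨T, hT⟩ := IH
    refine ⟨T * gg (k+1), ?_⟩
    rw [CwM_succ, hT, mul_assoc]

theorem gg_zero_eq (h : 2 ≤ n) : (gg 0 : M n) = σ ⟨0, by omega⟩ := gg_eq 0 (by omega)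

theorem RD : ∀ m : ℕ, m ≤ n → ∀ j : ℕ, j + 2 ≤ m → ∃ z : M n, δM m = z * gg j := by
  intro m
  induction m with
  | zero => intro _ j h; omega
  | succ m IH =>
    intro hm j hj
    rcases Nat.lt_or_ge (j+2) (m+1) with hlt | hge
    · obtain ⟨z, hz⟩ := IH (by omega) j (by omega)
      refine ⟨CwM m * z, ?_⟩
      show (CwM m * δM m : M n) = CwM m * z * gg j
      rw [hz, mul_assoc]
    · have hj2 : j + 2 = m + 1 := by omega
      have hn2 : 2 ≤ n := by omega
      have hm1 : 1 ≤ m := by omega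
      obtain ⟨T, hT⟩ := CwM_head (n := n) (m - 1)
      have hCw : (CwM m : M n) = gg 0 * T := by
        rw [show m = (m-1)+1 by omega] at hT ⊢
        exact hT
      have hhead : (δM (m+1) : M n) = gg 0 * (T * δM m) := by
        show (CwM m * δM m : M n) = gg 0 * (T * δM m)
        rw [hCw, mul_assoc]
      have hflip : (gg 0 : M n) * δM (m+1) = δM (m+1) * gg j :=
        flip_fam (m+1) hm 0 j (by omega)
      have hc : (gg 0 : M n) * δM (m+1) = gg 0 * ((T * δM m) * gg j) := by
        rw [hflip]
        conv_lhs => rw [hhead]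
        simp only [mul_assoc]
      rw [gg_zero_eq hn2] at hc
      have := cancel_σ hc
      exact ⟨T * δM m, this⟩

theorem LD : ∀ m : ℕ, m ≤ n → ∀ i j : ℕ, i + j + 2 = m → ∃ y : M n, δM m = gg i * y := by
  intro m hm i j hij
  obtain ⟨z, hz⟩ := RD m hm j (by omega)
  have hflip : (gg i : M n) * δM m = δM m * gg j := flip_fam m hm i j hij
  have hj : j < n - 1 := by omega
  have key : ((gg i * z : M n)) * σ ⟨j, hj⟩ = δM m * σ ⟨j, hj⟩ := by
    rw [← gg_eq j hj, mul_assoc, ← hz, hflip, hz]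
  exact ⟨z, (cancel_right _ key).symm⟩

theorem σ_dvd_Δ (i : Idx n) : DvdM (σ i) (δM n) := by
  have hi := i.isLt
  obtain ⟨y, hy⟩ := LD n (le_refl n) i.val (n - 2 - i.val) (by omega)
  refine ⟨y, ?_⟩
  rw [hy, gg_eq i.val hi]

/-- index flip -/
def flipIdx (i : Idx n) : Idx n := ⟨n - 2 - i, by have := i.isLt; omega⟩

theorem flipIdx_val (i : Idx n) : (flipIdx i : ℕ) = n - 2 - i := rfl

noncomputable def φ : M n →* M n :=
  PresentedMonoid.lift (fun i => σ (flipIdx i)) (by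
    intro a b h
    rcases h with ⟨i, j, hd, rfl, rfl⟩ | ⟨i, j, hd, rfl, rfl⟩
    · have hi := i.isLt
      have hj := j.isLt
      simp only [map_mul, FreeMonoid.lift_eval_of]
      exact comm_rel (Or.inr (by rw [flipIdx_val, flipIdx_val]; omega))
    · have hi := i.isLt
      have hj := j.isLt
      simp only [map_mul, FreeMonoid.lift_eval_of]
      exact braid_rel (Or.inr (by rw [flipIdx_val, flipIdx_val]; omega)))

theorem φ_σ (i : Idx n) : φ (σ i) = σ (flipIdx i) := rfl

theorem σ_flip (i : Idx n) : σ i * δM n = δM n * σ (flipIdx i) := by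
  have hi := i.isLt
  have key : (gg i.val : M n) * δM n = δM n * gg (n - 2 - i.val) :=
    flip_fam n (le_refl n) i.val (n - 2 - i.val) (by omega)
  rw [gg_eq i.val hi, gg_eq (n-2-i.val) (by omega)] at key
  have e1 : σ (⟨i.val, hi⟩ : Idx n) = σ i := by congr 1
  rw [e1] at key
  exact key

theorem flip_eq (x : M n) : x * δM n = δM n * φ x := by
  obtain ⟨u, rfl⟩ := PresentedMonoid.surjective_mk (rels := mrel n) x
  induction u using FreeMonoid.recOn with
  | one =>
    show (1 : M n) * δM n = δM n * φ 1
    rw [one_mul, map_one, mul_one]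
  | of_mul a u ihu =>
    show (σ a * mk u : M n) * δM n = δM n * φ (σ a * mk u)
    rw [map_mul, φ_σ, mul_assoc, ihu, ← mul_assoc, σ_flip, mul_assoc]

theorem flip_pow : ∀ (k : ℕ) (x : M n), ∃ x', x * (δM n) ^ k = (δM n) ^ k * x' := by
  intro k
  induction k with
  | zero => intro x; exact ⟨x, by rw [pow_zero, one_mul, mul_one]⟩
  | succ k IH =>
    intro x
    obtain ⟨x', hx'⟩ := IH x
    refine ⟨φ x', ?_⟩
    rw [pow_succ, ← mul_assoc, hx', mul_assoc, flip_eq, ← mul_assoc]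

theorem dvd_delta_pow (x : M n) : DvdM x ((δM n) ^ (ℓn x)) := by
  obtain ⟨u, rfl⟩ := PresentedMonoid.surjective_mk (rels := mrel n) x
  induction u using FreeMonoid.recOn with
  | one =>
    refine ⟨1, ?_⟩
    have h0 : ℓn (mk (1 : W n)) = 0 := by rw [ℓn_mk]; rfl
    rw [h0, pow_zero]
    show (1 : M n) = 1 * 1
    rw [one_mul]
  | of_mul a u ihu =>
    obtain ⟨d, hd⟩ := ihu
    obtain ⟨c, hc⟩ := σ_dvd_Δ a
    obtain ⟨c', hc'⟩ := flip_pow (ℓn (mk u : M n)) c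
    refine ⟨d * c', ?_⟩
    show (δM n : M n) ^ (ℓn (σ a * mk u : M n)) = (σ a * mk u) * (d * c')
    have hl2 : ℓn (σ a * mk u : M n) = ℓn (mk u : M n) + 1 := by
      rw [ℓn_mul, ℓn_σ]; omega
    rw [hl2]
    calc (δM n : M n) ^ (ℓn (mk u : M n) + 1) = δM n * (δM n) ^ (ℓn (mk u : M n)) := by
          rw [pow_succ']
      _ = σ a * (c * (δM n) ^ (ℓn (mk u : M n))) := by rw [hc, mul_assoc]
      _ = σ a * ((δM n) ^ (ℓn (mk u : M n)) * c') := by rw [hc']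
      _ = σ a * (mk u * d * c') := by rw [hd]
      _ = σ a * mk u * (d * c') := by simp only [mul_assoc]

theorem ℓn_rev (x : M n) : ℓn (rev x) = ℓn x := by
  obtain ⟨u, rfl⟩ := PresentedMonoid.surjective_mk (rels := mrel n) x
  induction u using FreeMonoid.recOn with
  | one =>
    show ℓn (rev (1 : M n)) = ℓn (1 : M n)
    rw [rev_one]
  | of_mul a u ihu =>
    show ℓn (rev (σ a * mk u : M n)) = ℓn (σ a * mk u : M n)
    rw [rev_mul, rev_σ, ℓn_mul, ℓn_mul, ℓn_σ]
    have : ℓn (rev (mk u : M n)) = ℓn (mk u : M n) := ihu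
    omega

theorem rev_pow (x : M n) (k : ℕ) : rev (x ^ k) = (rev x) ^ k := by
  induction k with
  | zero => rw [pow_zero, pow_zero]; exact rev_one
  | succ k IH => rw [pow_succ, rev_mul, IH, pow_succ']

theorem dvd_pow_of_le {x : M n} {k : ℕ} (h : ℓn x ≤ k) : DvdM x ((δM n) ^ k) := by
  obtain ⟨d, hd⟩ := dvd_delta_pow x
  refine ⟨d * (δM n) ^ (k - ℓn x), ?_⟩
  have e : (δM n : M n) ^ k = (δM n) ^ (ℓn x) * (δM n) ^ (k - ℓn x) := by
    rw [← pow_add]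
    congr 1
    omega
  rw [e, hd]
  simp only [mul_assoc]

theorem left_mult_delta_pow {x : M n} {k : ℕ} (h : ℓn x ≤ k) :
    ∃ c : M n, (δM n) ^ k = c * x := by
  obtain ⟨c, hc⟩ := dvd_pow_of_le (x := rev x) (k := k) (by rw [ℓn_rev]; exact h)
  refine ⟨rev c, ?_⟩
  have := congrArg rev hc
  rw [rev_pow, rev_δM n (le_refl n), rev_mul, rev_rev] at this
  exact this

end BraidProof

namespace BraidProof

variable {n : ℕ}

/-! ### Ore localization setup -/

noncomputable instance oreset : OreLocalization.OreSet (⊤ : Submonoid (M n)) where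
  ore_right_cancel r₁ r₂ s h := ⟨1, by
    simp only [OneMemClass.coe_one, one_mul]
    exact cancel_right (↑s) h⟩
  oreNum r s :=
    Classical.choose (left_mult_delta_pow (x := (s : M n))
      (k := max (ℓn r) (ℓn (s : M n))) (le_max_right _ _))
  oreDenom r s := ⟨Classical.choose (left_mult_delta_pow (x := r)
      (k := max (ℓn r) (ℓn (s : M n))) (le_max_left _ _)), trivial⟩
  ore_eq r s := by
    have h1 := Classical.choose_spec (left_mult_delta_pow (x := r)
      (k := max (ℓn r) (ℓn (s : M n))) (le_max_left _ _))
    have h2 := Classical.choose_spec (left_mult_delta_pow (x := (s : M n))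
      (k := max (ℓn r) (ℓn (s : M n))) (le_max_right _ _))
    show Classical.choose _ * r = Classical.choose _ * (s : M n)
    rw [← h1, ← h2]

theorem numHom_inj : Function.Injective
    (OreLocalization.numeratorHom : M n →* OreLocalization (⊤ : Submonoid (M n)) (M n)) := by
  intro x y h
  rw [OreLocalization.numeratorHom_apply, OreLocalization.numeratorHom_apply,
    OreLocalization.oreDiv_eq_iff] at h
  obtain ⟨u, v, h1, h2⟩ := h
  simp only [Submonoid.smul_def, smul_eq_mul, OneMemClass.coe_one, mul_one] at h1 h2
  rw [← h2] at h1
  exact (cancel_left _ h1).symm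

/-! ### relations hold in the braid group -/

theorem rel_holds {r : FreeGroup (Idx n)} (hr : r ∈ braidRels n) :
    (PresentedGroup.mk (braidRels n) r : BraidGroup n) = 1 :=
  (QuotientGroup.eq_one_iff r).mpr (Subgroup.subset_normalClosure hr)

theorem braidGen_comm' {i j : Idx n} (h : (i : ℕ) + 2 ≤ j) :
    braidGen (n := n) i * braidGen j = braidGen j * braidGen i := by
  have h1 := rel_holds (n := n)
    (Or.inl ⟨i, j, h, rfl⟩ : _ ∈ braidRels n)
  rw [map_mul, map_mul, map_inv, map_mul, mul_inv_eq_one] at h1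
  exact h1

theorem braidGen_comm {i j : Idx n} (h : dist i j) :
    braidGen (n := n) i * braidGen j = braidGen j * braidGen i := by
  rcases h with h | h
  · exact braidGen_comm' h
  · exact (braidGen_comm' h).symm

theorem braidGen_braid' {i j : Idx n} (h : (i : ℕ) + 1 = j) :
    braidGen (n := n) i * braidGen j * braidGen i =
      braidGen j * braidGen i * braidGen j := by
  have h1 := rel_holds (n := n)
    (Or.inr ⟨i, j, h, rfl⟩ : _ ∈ braidRels n)
  rw [map_mul, map_mul, map_inv, map_mul, map_mul, mul_inv_eq_one] at h1
  exact h1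

theorem braidGen_braid {i j : Idx n} (h : adj i j) :
    braidGen (n := n) i * braidGen j * braidGen i =
      braidGen j * braidGen i * braidGen j := by
  rcases h with h | h
  · exact braidGen_braid' h
  · exact (braidGen_braid' h).symm

/-- The canonical monoid map `M n →* BraidGroup n`. -/
noncomputable def ι : M n →* BraidGroup n :=
  PresentedMonoid.lift braidGen (by
    intro a b h
    rcases h with ⟨i, j, hd, rfl, rfl⟩ | ⟨i, j, hd, rfl, rfl⟩
    · simp only [map_mul, FreeMonoid.lift_eval_of]
      exact braidGen_comm (Or.inl hd)
    · simp only [map_mul, FreeMonoid.lift_eval_of]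
      exact braidGen_braid (Or.inl hd))

theorem ι_σ (i : Idx n) : ι (σ i) = braidGen i := rfl

/-! ### χ : BraidGroup → units of the Ore localization -/

noncomputable abbrev OL (n : ℕ) : Type _ := OreLocalization (⊤ : Submonoid (M n)) (M n)

noncomputable def uσ (i : Idx n) : (OL n)ˣ :=
  OreLocalization.numeratorUnit ⟨σ i, trivial⟩

theorem uσ_val (i : Idx n) :
    ((uσ i : (OL n)ˣ) : OL n) = OreLocalization.numeratorHom (σ i) := rfl

theorem uσ_rels : ∀ r ∈ braidRels n, FreeGroup.lift (uσ (n := n)) r = 1 := by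
  intro r hr
  rcases hr with ⟨i, j, hd, rfl⟩ | ⟨i, j, hd, rfl⟩
  · simp only [map_mul, map_inv, FreeGroup.lift_apply_of]
    rw [mul_inv_eq_one]
    apply Units.ext
    rw [Units.val_mul, Units.val_mul, uσ_val, uσ_val, ← map_mul, ← map_mul]
    exact congrArg _ (comm_rel (Or.inl hd))
  · simp only [map_mul, map_inv, FreeGroup.lift_apply_of]
    rw [mul_inv_eq_one]
    apply Units.ext
    rw [Units.val_mul, Units.val_mul, Units.val_mul, Units.val_mul, uσ_val, uσ_val,
      ← map_mul, ← map_mul, ← map_mul, ← map_mul]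
    exact congrArg _ (braid_rel (Or.inl hd))

noncomputable def χ : BraidGroup n →* (OL n)ˣ :=
  PresentedGroup.toGroup uσ_rels

theorem χ_gen (i : Idx n) : χ (braidGen (n := n) i) = uσ i :=
  PresentedGroup.toGroup.of uσ_rels

theorem chi_iota (x : M n) :
    ((χ (ι x) : (OL n)ˣ) : OL n) = OreLocalization.numeratorHom x := by
  obtain ⟨u, rfl⟩ := PresentedMonoid.surjective_mk (rels := mrel n) x
  induction u using FreeMonoid.recOn with
  | one =>
    show ((χ (ι (1 : M n)) : (OL n)ˣ) : OL n) = OreLocalization.numeratorHom (1 : M n)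
    rw [map_one, map_one, map_one, Units.val_one]
  | of_mul a u ihu =>
    show ((χ (ι (σ a * mk u)) : (OL n)ˣ) : OL n) =
      OreLocalization.numeratorHom (σ a * mk u)
    rw [map_mul, map_mul, map_mul, Units.val_mul, ι_σ, χ_gen, uσ_val, ihu]

theorem ι_inj : Function.Injective (ι : M n →* BraidGroup n) := by
  intro x y h
  apply numHom_inj
  rw [← chi_iota, ← chi_iota, h]

/-! ### range of ι -/

theorem ι_mem_pos (x : M n) : ι x ∈ PosBraid n := by
  obtain ⟨u, rfl⟩ := PresentedMonoid.surjective_mk (rels := mrel n) x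
  induction u using FreeMonoid.recOn with
  | one =>
    show ι (1 : M n) ∈ PosBraid n
    rw [map_one]
    exact Submonoid.one_mem _
  | of_mul a u ihu =>
    show ι (σ a * mk u) ∈ PosBraid n
    rw [map_mul]
    exact Submonoid.mul_mem _ (Submonoid.subset_closure ⟨a, rfl⟩) ihu

theorem pos_surj {b : BraidGroup n} (hb : b ∈ PosBraid n) : ∃ x : M n, ι x = b := by
  induction hb using Submonoid.closure_induction with
  | mem b hb => obtain ⟨i, rfl⟩ := hb; exact ⟨σ i, rfl⟩
  | one => exact ⟨1, map_one _⟩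
  | mul a b _ _ iha ihb =>
    obtain ⟨x, rfl⟩ := iha
    obtain ⟨y, rfl⟩ := ihb
    exact ⟨x * y, map_mul _ _ _⟩

theorem ι_gg (i : ℕ) :
    ι (gg i : M n) = if h : i < n - 1 then braidGen ⟨i, h⟩ else 1 := by
  unfold gg
  by_cases h : i < n - 1
  · rw [dif_pos h, dif_pos h, ι_σ]
  · rw [dif_neg h, dif_neg h, map_one]

theorem ι_delta : ∀ m : ℕ, ι (δM m : M n) = deltaAux n m := by
  intro m
  induction m with
  | zero => exact map_one _
  | succ m IH =>
    have e : deltaAux n (m+1) =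
        ((List.range m).map (fun i => if h : i < n - 1 then braidGen ⟨i, h⟩ else 1)).prod *
          deltaAux n m := rfl
    rw [e]
    show ι (CwM m * δM m : M n) = _
    rw [map_mul, IH]
    congr 1
    unfold CwM
    rw [map_list_prod, List.map_map]
    have hmap : List.map (⇑ι ∘ gg) (List.range m) =
        List.map (fun i => if h : i < n - 1 then braidGen ⟨i, h⟩ else 1) (List.range m) := by
      apply List.map_congr_left
      intro i _
      exact ι_gg i
    rw [hmap]

theorem div_transfer {x y : M n} : DividesL (ι x) (ι y) ↔ DvdM x y := by
  constructor
  · rintro ⟨z, hz, hy⟩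
    obtain ⟨c, rfl⟩ := pos_surj hz
    rw [← map_mul] at hy
    exact ⟨c, ι_inj hy⟩
  · rintro ⟨c, rfl⟩
    exact ⟨ι c, ι_mem_pos c, (map_mul _ _ _)⟩

end BraidProof

namespace BraidProof

variable {n : ℕ}

theorem delta_eq : braidDelta n = ι (δM n : M n) := (ι_delta n).symm

end BraidProof


open BraidProof in
/-- Grid lemma for `C`-tiles: with `t_2 s_1 = s'_1 t_1`, `t_1 s_2 = s'_2 t_0`
and `gcd_L(s'_2, t_1) = 1`, normality of `(s_1, s_2)` implies that of
`(s'_1, s'_2)`. -/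
theorem grid_C_tile (n : ℕ) (s1 s2 s1' s2' t0 t1 t2 : BraidGroup n)
    (hs1 : Simple s1) (hs2 : Simple s2) (hs1' : Simple s1') (hs2' : Simple s2')
    (ht0 : Simple t0) (ht1 : Simple t1) (ht2 : Simple t2)
    (e1 : t2 * s1 = s1' * t1) (e2 : t1 * s2 = s2' * t0)
    (hgcd : ∀ d ∈ PosBraid n, DividesL d s2' → DividesL d t1 → d = 1)
    (hn : GNormal s1 s2) :
    GNormal s1' s2' := by
  obtain ⟨m1, rfl⟩ := pos_surj hs1.1
  obtain ⟨m2, rfl⟩ := pos_surj hs2.1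
  obtain ⟨m1', rfl⟩ := pos_surj hs1'.1
  obtain ⟨m2', rfl⟩ := pos_surj hs2'.1
  obtain ⟨n0, rfl⟩ := pos_surj ht0.1
  obtain ⟨n1, rfl⟩ := pos_surj ht1.1
  obtain ⟨n2, rfl⟩ := pos_surj ht2.1
  -- transfer the two commutation relations to the monoid
  have e1m : n2 * m1 = m1' * n1 := by
    apply ι_inj
    rw [map_mul, map_mul]
    exact e1
  have e2m : n1 * m2 = m2' * n0 := by
    apply ι_inj
    rw [map_mul, map_mul]
    exact e2
  refine ⟨hs1'.1, ⟨ι m2', hs2'.1, rfl⟩, hs1'.2, ?_⟩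
  -- the universal property
  intro d hd hdiv hdelta
  obtain ⟨dm, rfl⟩ := pos_surj hd
  -- translate divisibilities
  have hdiv' : DvdM dm (m1' * m2') := by
    rw [← map_mul] at hdiv
    exact div_transfer.mp hdiv
  have hdelta' : DvdM dm (δM n : M n) := by
    rw [delta_eq] at hdelta
    exact div_transfer.mp hdelta
  -- t2 divides Δ
  have ht2Δ : DvdM n2 (δM n : M n) := by
    have := ht2.2
    rw [show braidDelta n = ι (δM n : M n) from delta_eq] at this
    exact div_transfer.mp this
  obtain ⟨q, hq⟩ := ht2Δ
  -- Step A : dm divides t2 * (s1 * s2)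
  have hkey : n2 * (m1 * m2) = (m1' * m2') * n0 := by
    calc n2 * (m1 * m2) = (n2 * m1) * m2 := by rw [mul_assoc]
      _ = (m1' * n1) * m2 := by rw [e1m]
      _ = m1' * (n1 * m2) := by rw [mul_assoc]
      _ = m1' * (m2' * n0) := by rw [e2m]
      _ = (m1' * m2') * n0 := by rw [mul_assoc]
  have hA : DvdM dm (n2 * (m1 * m2)) := by
    obtain ⟨u, hu⟩ := hdiv'
    refine ⟨u * n0, ?_⟩
    rw [hkey, hu, mul_assoc]
  -- Step B : the minimal complement of dm along t2
  obtain ⟨c, hc, hmin⟩ := compl_word n2 dm ⟨m1 * m2, hA⟩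
  have hc1 : DvdM c (m1 * m2) := hmin _ hA
  have hc2 : DvdM c q := by
    apply hmin
    rw [← hq]
    exact hdelta'
  have hqΔ : (δM n : M n) = q * φ n2 := by
    have hf2 : n2 * (q * φ n2) = n2 * (δM n : M n) := by
      rw [← mul_assoc, ← hq, ← flip_eq]
    exact (cancel_left _ hf2).symm
  have hc3 : DvdM c (δM n : M n) := by
    obtain ⟨r, hr⟩ := hc2
    exact ⟨r * φ n2, by rw [hqΔ, hr]; simp only [mul_assoc]⟩
  -- Step C : apply the normality of (s1, s2)
  have hcs1 : DvdM c m1 := by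
    have h4 := hn.2.2.2 (ι c) (ι_mem_pos c) (by rw [← map_mul]; exact div_transfer.mpr hc1)
      (by rw [delta_eq]; exact div_transfer.mpr hc3)
    exact div_transfer.mp h4
  -- Step D : dm divides s1' * t1
  have hD : DvdM dm (m1' * n1) := by
    obtain ⟨p, hp⟩ := hc
    obtain ⟨w, hw⟩ := hcs1
    refine ⟨p * w, ?_⟩
    rw [← e1m, hw]
    calc n2 * (c * w) = (n2 * c) * w := by rw [mul_assoc]
      _ = (dm * p) * w := by rw [hp]
      _ = dm * (p * w) := by rw [mul_assoc]
  -- Step E : minimal complement of dm along s1'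
  obtain ⟨c₂, hc₂, hmin₂⟩ := compl_word m1' dm ⟨n1, hD⟩
  have hc₂t1 : DvdM c₂ n1 := hmin₂ _ hD
  have hc₂s2 : DvdM c₂ m2' := hmin₂ _ hdiv'
  -- Step F : hgcd forces c₂ = 1
  have hc₂1 : c₂ = 1 := by
    have h5 := hgcd (ι c₂) (ι_mem_pos c₂) (div_transfer.mpr hc₂s2) (div_transfer.mpr hc₂t1)
    apply ι_inj
    rw [h5, map_one]
  rw [hc₂1] at hc₂
  rw [mul_one] at hc₂
  exact div_transfer.mpr hc₂
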